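/- Let n, p ∈ ℕ, let x ∈ ℝ^{n×p} be raw design data, T ∈ ℝ^n covariate values, K : ℝ → ℝ a nonnegative kernel and h > 0 a bandwidth with S_i := Σ_{j=1}^n K((T_j − T_i)/h) > 0 for every i, and let the kernel-smoothed design be X̃_{ij} = x_{ij} − (1/S_i) Σ_{m=1}^n K((T_m − T_i)/h) x_{mj}. Let Ỹ ∈ ℝ^n, λ₁ ≥ 0, λ₂ > 0, and let β̂ ∈ ℝ^p be a global minimizer of the Elastic Net objective L(β) = Σ_{i=1}^n (Ỹ_i − Σ_{j=1}^p β_j X̃_{ij})² + λ₂ Σ_{j=1}^p β_j² + λ₁ Σ_{j=1}^p |β_j|. Fix indices k, l and suppose β̂_k · β̂_l > 0. Then with m = max_{1≤i≤n} |x_{ik} − x_{il}| and r̂_i = Ỹ_i − Σ_{j=1}^p β̂_j X̃_{ij}, one has |β̂_k − β̂_l| ≤ (2m/λ₂) Σ_{i=1}^n |r̂_i|. -/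

import Mathlib

open Finset

/-- The Elastic Net objective
`L(β) = ∑ᵢ (Ỹᵢ − ∑ⱼ βⱼ X̃ᵢⱼ)² + λ₂ ∑ⱼ βⱼ² + λ₁ ∑ⱼ |βⱼ|`. -/
noncomputable def enetObj {n p : ℕ} (Xt : Fin n → Fin p → ℝ) (Yt : Fin n → ℝ)
    (lam1 lam2 : ℝ) (β : Fin p → ℝ) : ℝ :=
  ∑ i, (Yt i - ∑ j, β j * Xt i j) ^ 2 + lam2 * ∑ j, (β j) ^ 2 + lam1 * ∑ j, |β j|

lemma quad_coeff_zero (A B δ : ℝ) (hδ : 0 < δ) (hA : 0 ≤ A)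
    (hq : ∀ ε : ℝ, |ε| < δ → 0 ≤ A * ε ^ 2 + B * ε) : B = 0 := by
  by_contra hB
  have hB' : 0 < |B| := abs_pos.mpr hB
  set t : ℝ := min (δ / 2) (|B| / (2 * (A + 1))) with ht
  have hA1 : 0 < A + 1 := by linarith
  have ht0 : 0 < t := lt_min (by linarith) (by positivity)
  have htδ : |t| < δ := by
    rw [abs_of_pos ht0]
    exact lt_of_le_of_lt (min_le_left _ _) (by linarith)
  have h1 := hq t htδ
  have h2 := hq (-t) (by rwa [abs_neg])
  have hBt : |B| * t ≤ A * t ^ 2 := by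
    rcases abs_cases B with ⟨hb, _⟩ | ⟨hb, _⟩
    · nlinarith
    · nlinarith
  have hBle : |B| ≤ A * t := by
    have := mul_le_mul_of_nonneg_right hBt (le_of_lt (inv_pos.mpr ht0))
    calc |B| = |B| * t * t⁻¹ := by field_simp
    _ ≤ A * t ^ 2 * t⁻¹ := this
    _ = A * t := by field_simp
  have htle : t ≤ |B| / (2 * (A + 1)) := min_le_right _ _
  have h3 : (A + 1) * (|B| / (2 * (A + 1))) = |B| / 2 := by field_simp
  linarith [hBle, mul_le_mul (le_refl (A+1)) htle (le_of_lt ht0) (le_of_lt hA1)]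

/-- Theorem 3.1 (group effect of the Elastic Net for partially linear models). -/
theorem elasticNet_group_effect {n p : ℕ}
    (x : Fin n → Fin p → ℝ) (T : Fin n → ℝ)
    (K : ℝ → ℝ) (hK : ∀ y, 0 ≤ K y) (h : ℝ) (hh : 0 < h)
    (hS : ∀ i : Fin n, 0 < ∑ j, K ((T j - T i) / h))
    (Xt : Fin n → Fin p → ℝ)
    (hXt : ∀ i j, Xt i j = x i j -
      (1 / ∑ m, K ((T m - T i) / h)) * ∑ m, K ((T m - T i) / h) * x m j)
    (Yt : Fin n → ℝ) (lam1 lam2 : ℝ) (hlam1 : 0 ≤ lam1) (hlam2 : 0 < lam2)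
    (βh : Fin p → ℝ)
    (hmin : ∀ β, enetObj Xt Yt lam1 lam2 βh ≤ enetObj Xt Yt lam1 lam2 β)
    (k l : Fin p) (hsign : βh k * βh l > 0)
    (m : ℝ) (hm : IsGreatest (Set.range fun i : Fin n => |x i k - x i l|) m) :
    |βh k - βh l| ≤ (2 * m / lam2) * ∑ i, |Yt i - ∑ j, βh j * Xt i j| := by
  obtain ⟨i0, hi0⟩ := hm.1
  have hm0 : 0 ≤ m := hi0 ▸ abs_nonneg _
  have hrsum : 0 ≤ ∑ i, |Yt i - ∑ j, βh j * Xt i j| :=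
    Finset.sum_nonneg fun i _ => abs_nonneg _
  by_cases hkl : k = l
  · subst hkl
    simp only [sub_self, abs_zero]
    positivity
  -- setup
  set r : Fin n → ℝ := fun i => Yt i - ∑ j, βh j * Xt i j with hr
  set a : Fin n → ℝ := fun i => Xt i k - Xt i l with ha
  -- bound |a i| ≤ 2m
  have habound : ∀ i, |a i| ≤ 2 * m := by
    intro i
    have hdm : ∀ j : Fin n, |x j k - x j l| ≤ m := fun j => hm.2 ⟨j, rfl⟩
    have hSi := hS i
    have hai : a i = (x i k - x i l) -
        (1 / ∑ m', K ((T m' - T i) / h)) * ∑ m', K ((T m' - T i) / h) * (x m' k - x m' l) := by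
      simp only [ha, hXt i k, hXt i l]
      rw [show (∑ m', K ((T m' - T i) / h) * (x m' k - x m' l))
        = (∑ m', K ((T m' - T i) / h) * x m' k) - ∑ m', K ((T m' - T i) / h) * x m' l by
          rw [← Finset.sum_sub_distrib]; exact Finset.sum_congr rfl fun j _ => by ring]
      ring
    have h2 : |(1 / ∑ m', K ((T m' - T i) / h)) *
        ∑ m', K ((T m' - T i) / h) * (x m' k - x m' l)| ≤ m := by
      rw [abs_mul]
      have hw : |∑ m', K ((T m' - T i) / h) * (x m' k - x m' l)|
          ≤ (∑ m', K ((T m' - T i) / h)) * m := by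
        calc |∑ m', K ((T m' - T i) / h) * (x m' k - x m' l)|
            ≤ ∑ m', |K ((T m' - T i) / h) * (x m' k - x m' l)| := Finset.abs_sum_le_sum_abs _ _
          _ ≤ ∑ m', K ((T m' - T i) / h) * m := by
              apply Finset.sum_le_sum
              intro j _
              rw [abs_mul, abs_of_nonneg (hK _)]
              exact mul_le_mul_of_nonneg_left (hdm j) (hK _)
          _ = (∑ m', K ((T m' - T i) / h)) * m := by rw [← Finset.sum_mul]
      rw [abs_of_pos (by positivity : (0:ℝ) < 1 / ∑ m', K ((T m' - T i) / h))]
      calc (1 / ∑ m', K ((T m' - T i) / h)) * |∑ m', K ((T m' - T i) / h) * (x m' k - x m' l)|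
          ≤ (1 / ∑ m', K ((T m' - T i) / h)) * ((∑ m', K ((T m' - T i) / h)) * m) := by
            apply mul_le_mul_of_nonneg_left hw (by positivity)
        _ = m := by field_simp
    calc |a i| ≤ |x i k - x i l| +
        |(1 / ∑ m', K ((T m' - T i) / h)) * ∑ m', K ((T m' - T i) / h) * (x m' k - x m' l)| := by
          rw [hai]; exact abs_sub _ _
      _ ≤ m + m := add_le_add (hdm i) h2
      _ = 2 * m := by ring
  -- both coordinates nonzero
  have hk0 : βh k ≠ 0 := fun hh0 => by simp [hh0] at hsign
  have hl0 : βh l ≠ 0 := fun hh0 => by simp [hh0] at hsign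
  set δ : ℝ := min |βh k| |βh l| with hδdef
  have hδ : 0 < δ := lt_min (abs_pos.mpr hk0) (abs_pos.mpr hl0)
  -- the perturbation family
  set c : Fin p → ℝ := fun j => (if j = l then (1:ℝ) else 0) - (if j = k then 1 else 0) with hc
  have hlk : ¬ l = k := fun h' => hkl h'.symm
  have hck : c k = -1 := by simp [hc, hkl]
  have hcl : c l = 1 := by simp [hc, hlk]
  have hsum_cXt : ∀ i, ∑ j, c j * Xt i j = Xt i l - Xt i k := by
    intro i
    simp only [hc, sub_mul, ite_mul, one_mul, zero_mul, Finset.sum_sub_distrib,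
      Finset.sum_ite_eq', Finset.mem_univ, if_true]
  have hsum_cβ : ∑ j, c j * βh j = βh l - βh k := by
    simp only [hc, sub_mul, ite_mul, one_mul, zero_mul, Finset.sum_sub_distrib,
      Finset.sum_ite_eq', Finset.mem_univ, if_true]
  have hsum_c2 : ∑ j, (c j) ^ 2 = 2 := by
    have : ∀ j, (c j) ^ 2 = (if j = l then (1:ℝ) else 0) + (if j = k then 1 else 0) := by
      intro j
      by_cases hjl : j = l
      · subst hjl; simp [hc, hlk]
      · by_cases hjk : j = k
        · subst hjk; simp [hc, hjl]
        · simp [hc, hjl, hjk]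
    rw [Finset.sum_congr rfl fun j _ => this j, Finset.sum_add_distrib]
    simp only [Finset.sum_ite_eq', Finset.mem_univ, if_true]
    norm_num
  -- key identity via perturbation
  set A : ℝ := (∑ i, (a i) ^ 2) + 2 * lam2 with hA
  set B : ℝ := 2 * (∑ i, a i * r i) + 2 * lam2 * (βh l - βh k) with hB
  have hq : ∀ ε : ℝ, |ε| < δ → 0 ≤ A * ε ^ 2 + B * ε := by
    intro ε hε
    have hεk : |ε| < |βh k| := lt_of_lt_of_le hε (min_le_left _ _)
    have hεl : |ε| < |βh l| := lt_of_lt_of_le hε (min_le_right _ _)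
    set βe : Fin p → ℝ := fun j => βh j + ε * c j with hβe
    have h1 : ∀ i, ∑ j, βe j * Xt i j = (∑ j, βh j * Xt i j) - ε * a i := by
      intro i
      simp only [hβe, add_mul, Finset.sum_add_distrib, mul_assoc, ← Finset.mul_sum,
        hsum_cXt i, ha]
      ring
    have h2 : ∑ j, (βe j) ^ 2 = (∑ j, (βh j) ^ 2) + 2 * ε * (βh l - βh k) + ε ^ 2 * 2 := by
      have : ∀ j, (βe j) ^ 2 = (βh j) ^ 2 + 2 * ε * (c j * βh j) + ε ^ 2 * (c j) ^ 2 := by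
        intro j; simp only [hβe]; ring
      rw [Finset.sum_congr rfl fun j _ => this j, Finset.sum_add_distrib,
        Finset.sum_add_distrib, ← Finset.mul_sum, ← Finset.mul_sum, hsum_cβ, hsum_c2]
    have h3 : ∑ j, |βe j| = ∑ j, |βh j| := by
      have hptw : ∀ j, |βe j| = |βh j| +
          ((if j = k then |βh k - ε| - |βh k| else 0) +
           (if j = l then |βh l + ε| - |βh l| else 0)) := by
        intro j
        by_cases hjk : j = k
        · subst hjk; simp [hβe, hck, hkl]; ring_nf
        · by_cases hjl : j = l
          · subst hjl; simp [hβe, hcl, hjk]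
          · simp [hβe, hc, hjk, hjl]
      have habs : |βh k - ε| + |βh l + ε| = |βh k| + |βh l| := by
        rcases mul_pos_iff.mp hsign with ⟨hpk, hpl⟩ | ⟨hnk, hnl⟩
        · rw [abs_of_pos hpk] at hεk; rw [abs_of_pos hpl] at hεl
          rw [abs_of_pos hpk, abs_of_pos hpl,
            abs_of_pos (by cases abs_lt.mp hεk; linarith : (0:ℝ) < βh k - ε),
            abs_of_pos (by cases abs_lt.mp hεl; linarith : (0:ℝ) < βh l + ε)]
          ring
        · rw [abs_of_neg hnk] at hεk; rw [abs_of_neg hnl] at hεl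
          rw [abs_of_neg hnk, abs_of_neg hnl,
            abs_of_neg (by cases abs_lt.mp hεk; linarith : βh k - ε < 0),
            abs_of_neg (by cases abs_lt.mp hεl; linarith : βh l + ε < 0)]
          ring
      rw [Finset.sum_congr rfl fun j _ => hptw j, Finset.sum_add_distrib,
        Finset.sum_add_distrib]
      simp [habs]
      linarith
    have hmin' := hmin βe
    have hobj : enetObj Xt Yt lam1 lam2 βe =
        enetObj Xt Yt lam1 lam2 βh + (A * ε ^ 2 + B * ε) := by
      simp only [enetObj, h2, h3]
      have : ∀ i, (Yt i - ∑ j, βe j * Xt i j) ^ 2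
          = (Yt i - ∑ j, βh j * Xt i j) ^ 2 + 2 * ε * (a i * r i) + ε ^ 2 * (a i) ^ 2 := by
        intro i; rw [h1 i]
        simp only [hr]; ring
      rw [Finset.sum_congr rfl fun i _ => this i, Finset.sum_add_distrib,
        Finset.sum_add_distrib, ← Finset.mul_sum, ← Finset.mul_sum]
      simp only [hA, hB]; ring
    rw [hobj] at hmin'
    linarith
  have hA0 : 0 ≤ A := by
    have : 0 ≤ ∑ i, (a i) ^ 2 := Finset.sum_nonneg fun i _ => sq_nonneg _
    simp only [hA]; linarith
  have hB0 : B = 0 := quad_coeff_zero A B δ hδ hA0 hq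
  have hkey : lam2 * (βh k - βh l) = ∑ i, a i * r i := by
    simp only [hB] at hB0; linarith
  -- conclude
  have hfin : |βh k - βh l| = |∑ i, a i * r i| / lam2 := by
    rw [← hkey, abs_mul, abs_of_pos hlam2]
    field_simp
  rw [hfin]
  rw [div_le_iff₀ hlam2] at *
  calc |∑ i, a i * r i| ≤ ∑ i, |a i * r i| := Finset.abs_sum_le_sum_abs _ _
    _ ≤ ∑ i, 2 * m * |r i| := by
        apply Finset.sum_le_sum
        intro i _
        rw [abs_mul]
        exact mul_le_mul_of_nonneg_right (habound i) (abs_nonneg _)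
    _ = 2 * m * ∑ i, |r i| := by rw [Finset.mul_sum]
    _ = 2 * m / lam2 * (∑ i, |Yt i - ∑ j, βh j * Xt i j|) * lam2 := by
        simp only [hr]; field_simp
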